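/- A Partition instance with sum 2B is a yes-instance if and only if the 4-day scheduling instance constructed from it (with special clients x and y and item clients, and equitability k = 8B) admits a k-equitable set of schedules. -/
import Mathlib


def Cg {α : Type} [DecidableEq α] [Fintype α] {M : ℕ} (pos : α ≃ Fin M)
    (p : α → ℕ) (c : α) : ℕ :=
  ∑ c' ∈ Finset.univ.filter (fun c' => pos c' ≤ pos c), p c'

def pRed (N B : ℕ) (s : Fin N → ℕ) : Fin 4 → (Fin N ⊕ Bool) → ℕ :=
  fun i c =>
    match c with
    | Sum.inl j => if i = 1 ∨ i = 3 then s j else 0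
    | Sum.inr false => if i = 0 then 2 * B else if i = 1 then 5 * B else 0
    | Sum.inr true => if i = 2 then 2 * B else if i = 3 then 5 * B else 0

lemma exists_sorted {α : Type} [DecidableEq α] [Fintype α] {M : ℕ}
    (hM : Fintype.card α = M) (key : α → ℕ) :
    ∃ pos : α ≃ Fin M, ∀ a b : α, pos a ≤ pos b → key a ≤ key b := by
  let e : α ≃ Fin M := Fintype.equivFinOfCardEq hM
  let f : Fin M → ℕ := key ∘ e.symm
  refine ⟨e.trans (Tuple.sort f).symm, ?_⟩
  intro a b h
  have := Tuple.monotone_sort f h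
  simpa [f, e] using this

lemma Cg_mono_key {α : Type} [DecidableEq α] [Fintype α] {M : ℕ} (pos : α ≃ Fin M)
    (key : α → ℕ) (h : ∀ a b : α, pos a ≤ pos b → key a ≤ key b) (p : α → ℕ) (c : α) :
    Cg pos p c ≤ ∑ c' ∈ Finset.univ.filter (fun c' => key c' ≤ key c), p c' := by
  apply Finset.sum_le_sum_of_subset
  intro a ha
  simp only [Finset.mem_filter, Finset.mem_univ, true_and] at ha ⊢
  exact h a c ha

lemma sum_expand {N : ℕ} (P : Fin N ⊕ Bool → Prop) [DecidablePred P]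
    (p : Fin N ⊕ Bool → ℕ) :
    ∑ c' ∈ Finset.univ.filter P, p c'
      = (∑ j, if P (Sum.inl j) then p (Sum.inl j) else 0)
      + ((if P (Sum.inr true) then p (Sum.inr true) else 0)
      + (if P (Sum.inr false) then p (Sum.inr false) else 0)) := by
  rw [Finset.sum_filter, Fintype.sum_sum_type, Fintype.sum_bool]

lemma le_Cg {α : Type} [DecidableEq α] [Fintype α] {M : ℕ} (pos : α ≃ Fin M)
    (p : α → ℕ) (c c' : α) (h : pos c' ≤ pos c) : p c' ≤ Cg pos p c := by
  apply Finset.single_le_sum (f := p) (fun i _ => Nat.zero_le _)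
  simp [h]

theorem stmt9 (N B : ℕ) (s : Fin N → ℕ) (hsum : ∑ j, s j = 2 * B) :
    (∃ S₁ : Finset (Fin N), ∑ j ∈ S₁, s j = B) ↔
    (∃ σ : Fin 4 → ((Fin N ⊕ Bool) ≃ Fin (N + 2)),
      ∀ c, ∑ i, Cg (σ i) (pRed N B s i) c ≤ 8 * B) := by
  constructor
  · rintro ⟨S₁, hS₁⟩
    have hsplit := Finset.sum_filter_add_sum_filter_not Finset.univ (fun j => j ∈ S₁) s
    rw [Finset.filter_mem_eq_inter, Finset.univ_inter, hS₁, hsum] at hsplit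
    have hS₂ : ∑ j ∈ Finset.univ.filter (fun j => j ∉ S₁), s j = B := by omega
    have hcard : Fintype.card (Fin N ⊕ Bool) = N + 2 := by simp
    obtain ⟨p0, h0⟩ := exists_sorted hcard
      (fun c => match c with | Sum.inr false => 1 | _ => 0)
    obtain ⟨p1, h1⟩ := exists_sorted hcard
      (fun c => match c with
        | Sum.inl j => if j ∈ S₁ then 1 else 3 | Sum.inr false => 2 | Sum.inr true => 0)
    obtain ⟨p2, h2⟩ := exists_sorted hcard
      (fun c => match c with | Sum.inr true => 1 | _ => 0)
    obtain ⟨p3, h3⟩ := exists_sorted hcard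
      (fun c => match c with
        | Sum.inl j => if j ∈ S₁ then 3 else 1 | Sum.inr false => 0 | Sum.inr true => 2)
    refine ⟨![p0, p1, p2, p3], ?_⟩
    intro c
    rw [Fin.sum_univ_four]
    simp only [Matrix.cons_val_zero, Matrix.cons_val_one, Matrix.head_cons,
      Matrix.cons_val_two, Matrix.tail_cons, Matrix.cons_val_three, Matrix.head_fin_const]
    have t0 := Cg_mono_key p0 _ h0 (pRed N B s 0) c
    have t1 := Cg_mono_key p1 _ h1 (pRed N B s 1) c
    have t2 := Cg_mono_key p2 _ h2 (pRed N B s 2) c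
    have t3 := Cg_mono_key p3 _ h3 (pRed N B s 3) c
    rw [sum_expand] at t0 t1 t2 t3
    match c with
    | Sum.inl j =>
      by_cases hj : j ∈ S₁
      · simp [pRed, hj] at t0 t1 t2 t3
        have s1 : (∑ x : Fin N, if (if x ∈ S₁ then (1:ℕ) else 3) ≤ 1 then s x else 0)
            = B := by
          have e : ∀ x : Fin N, (if (if x ∈ S₁ then (1:ℕ) else 3) ≤ 1 then s x else 0)
              = if x ∈ S₁ then s x else 0 := by
            intro x; by_cases h : x ∈ S₁ <;> simp [h]
          simp only [e, Finset.sum_ite_mem, Finset.univ_inter, hS₁]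
        have s3 : (∑ x : Fin N, if (if x ∈ S₁ then (3:ℕ) else 1) ≤ 3 then s x else 0)
            = 2 * B := by
          have e : ∀ x : Fin N, (if (if x ∈ S₁ then (3:ℕ) else 1) ≤ 3 then s x else 0)
              = s x := by
            intro x; by_cases h : x ∈ S₁ <;> simp [h]
          simp only [e, hsum]
        omega
      · simp [pRed, hj] at t0 t1 t2 t3
        have s1 : (∑ x : Fin N, if (if x ∈ S₁ then (1:ℕ) else 3) ≤ 3 then s x else 0)
            = 2 * B := by
          have e : ∀ x : Fin N, (if (if x ∈ S₁ then (1:ℕ) else 3) ≤ 3 then s x else 0)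
              = s x := by
            intro x; by_cases h : x ∈ S₁ <;> simp [h]
          simp only [e, hsum]
        have s3 : (∑ x : Fin N, if (if x ∈ S₁ then (3:ℕ) else 1) ≤ 1 then s x else 0)
            = B := by
          have e : ∀ x : Fin N, (if (if x ∈ S₁ then (3:ℕ) else 1) ≤ 1 then s x else 0)
              = if x ∉ S₁ then s x else 0 := by
            intro x; by_cases h : x ∈ S₁ <;> simp [h]
          rw [Finset.sum_congr rfl (fun x _ => e x), ← Finset.sum_filter, hS₂]
        omega
    | Sum.inr false =>
      simp [pRed] at t0 t1 t2 t3
      have s1 : (∑ x : Fin N, if (if x ∈ S₁ then (1:ℕ) else 3) ≤ 2 then s x else 0)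
          = B := by
        have e : ∀ x : Fin N, (if (if x ∈ S₁ then (1:ℕ) else 3) ≤ 2 then s x else 0)
            = if x ∈ S₁ then s x else 0 := by
          intro x; by_cases h : x ∈ S₁ <;> simp [h]
        simp only [e, Finset.sum_ite_mem, Finset.univ_inter, hS₁]
      have s3 : (∑ x : Fin N, if (if x ∈ S₁ then (3:ℕ) else 1) = 0 then s x else 0)
          = 0 :=
        Finset.sum_eq_zero (fun x _ => by by_cases h : x ∈ S₁ <;> simp [h])
      omega
    | Sum.inr true =>
      simp [pRed] at t0 t1 t2 t3
      have s3 : (∑ x : Fin N, if (if x ∈ S₁ then (3:ℕ) else 1) ≤ 2 then s x else 0)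
          = B := by
        have e : ∀ x : Fin N, (if (if x ∈ S₁ then (3:ℕ) else 1) ≤ 2 then s x else 0)
            = if x ∉ S₁ then s x else 0 := by
          intro x; by_cases h : x ∈ S₁ <;> simp [h]
        rw [Finset.sum_congr rfl (fun x _ => e x), ← Finset.sum_filter, hS₂]
      have s1 : (∑ x : Fin N, if (if x ∈ S₁ then (1:ℕ) else 3) = 0 then s x else 0)
          = 0 :=
        Finset.sum_eq_zero (fun x _ => by by_cases h : x ∈ S₁ <;> simp [h])
      omega
  · rintro ⟨σ, hσ⟩
    rcases Nat.eq_zero_or_pos B with hB | hB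
    · exact ⟨∅, by simp [hB]⟩
    set x := (Sum.inr false : Fin N ⊕ Bool) with hxdef
    set y := (Sum.inr true : Fin N ⊕ Bool) with hydef
    set T := Finset.univ.filter (fun j => σ 1 (Sum.inl j) ≤ σ 1 x) with hTdef
    set D := Finset.univ.filter (fun j => σ 3 (Sum.inl j) ≤ σ 3 y) with hDdef
    have hT : ∑ j ∈ T, s j ≤ B := by
      have hx := hσ x
      rw [Fin.sum_univ_four] at hx
      have e0 : 2 * B ≤ Cg (σ 0) (pRed N B s 0) x := by
        simpa [pRed] using le_Cg (σ 0) (pRed N B s 0) x x le_rfl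
      have e1 : 5 * B + ∑ j ∈ T, s j ≤ Cg (σ 1) (pRed N B s 1) x := by
        rw [Cg, sum_expand, hTdef, Finset.sum_filter]
        simp [pRed, hxdef]
        omega
      omega
    have hD : ∑ j ∈ D, s j ≤ B := by
      have hy := hσ y
      rw [Fin.sum_univ_four] at hy
      have e2 : 2 * B ≤ Cg (σ 2) (pRed N B s 2) y := by
        simpa [pRed] using le_Cg (σ 2) (pRed N B s 2) y y le_rfl
      have e3 : 5 * B + ∑ j ∈ D, s j ≤ Cg (σ 3) (pRed N B s 3) y := by
        rw [Cg, sum_expand, hDdef, Finset.sum_filter]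
        simp [pRed, hydef]
        omega
      omega
    have hcov : T ∪ D = Finset.univ := by
      apply Finset.eq_univ_of_forall
      intro j
      by_contra hj
      simp only [Finset.mem_union, hTdef, hDdef, Finset.mem_filter, Finset.mem_univ,
        true_and, not_or, not_le] at hj
      obtain ⟨hj1, hj3⟩ := hj
      have c1 : 5 * B ≤ Cg (σ 1) (pRed N B s 1) (Sum.inl j) := by
        have := le_Cg (σ 1) (pRed N B s 1) (Sum.inl j) x hj1.le
        simpa [pRed] using this
      have c3 : 5 * B ≤ Cg (σ 3) (pRed N B s 3) (Sum.inl j) := by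
        have := le_Cg (σ 3) (pRed N B s 3) (Sum.inl j) y hj3.le
        simpa [pRed] using this
      have hjj := hσ (Sum.inl j)
      rw [Fin.sum_univ_four] at hjj
      omega
    refine ⟨T, ?_⟩
    have hu : ∑ j ∈ T ∪ D, s j = 2 * B := by rw [hcov, hsum]
    have hui := Finset.sum_union_inter (s₁ := T) (s₂ := D) (f := s)
    omega
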